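/- Let e, d, m0 be integers with e ≥ 1, d ≥ 3e, and m0 ≥ 3e − 3. If e(d − m0 − 8) + m0 + 3 = 0 and (d−3e)(d−3e+3)/2 − (m0−3e+3)(m0−3e+4)/2 − 2e ≥ 0, then either (d = 3e+2, m0 = 3e−3, and e ≤ 2), or (d = 4e+1 and m0 = 4e−3), or (d = 5e and m0 = 5e−3). -/
import Mathlib


/-- Case analysis: `A = L(e, e-1, 2e, 1)` splits off 3 times from `L(d, m0, 2e, 4)`.
If `M·A = 0` and `v(M) ≥ 0` then one of three families occurs. -/
theorem split_three_times (e d m0 : ℤ) (he : 1 ≤ e) (hd : 3 * e ≤ d) (hm : 3 * e - 3 ≤ m0)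
    (hMA : e * (d - m0 - 8) + m0 + 3 = 0)
    (hvM : 0 ≤ (d - 3 * e) * (d - 3 * e + 3) / 2 - (m0 - 3 * e + 3) * (m0 - 3 * e + 4) / 2
        - 2 * e) :
    (d = 3 * e + 2 ∧ m0 = 3 * e - 3 ∧ e ≤ 2) ∨
    (d = 4 * e + 1 ∧ m0 = 4 * e - 3) ∨
    (d = 5 * e ∧ m0 = 5 * e - 3) := by
  set a : ℤ := d - 3 * e with ha_def
  set b : ℤ := m0 - 3 * e + 3 with hb_def
  have ha0 : 0 ≤ a := by omega
  have hb0 : 0 ≤ b := by omega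
  -- divisibility to clear the integer divisions
  have hdva : (2 : ℤ) ∣ a * (a + 3) := by
    rcases Int.even_or_odd a with ⟨x, hx⟩ | ⟨x, hx⟩
    · exact ⟨x * (a + 3), by rw [hx]; ring⟩
    · exact ⟨a * (x + 2), by rw [hx]; ring⟩
  have hdvb : (2 : ℤ) ∣ b * (b + 1) := by
    rcases Int.even_or_odd b with ⟨x, hx⟩ | ⟨x, hx⟩
    · exact ⟨x * (b + 1), by rw [hx]; ring⟩
    · exact ⟨b * (x + 1), by rw [hx]; ring⟩
  have hea : a * (a + 3) / 2 * 2 = a * (a + 3) := Int.ediv_mul_cancel hdva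
  have heb : b * (b + 1) / 2 * 2 = b * (b + 1) := Int.ediv_mul_cancel hdvb
  have hv2 : 0 ≤ a * (a + 3) - b * (b + 1) - 4 * e := by
    have h1 : m0 - 3 * e + 4 = b + 1 := by omega
    rw [h1] at hvM
    nlinarith [hvM]
  have key : b = e * (b + 2 - a) := by linear_combination hMA
  set k : ℤ := b + 2 - a with hk_def
  rcases lt_trichotomy k 1 with hk | hk | hk
  · -- k ≤ 0 : if k < 0 then b < 0, contradiction; k = 0 gives first family
    have hk0 : k = 0 := by nlinarith
    have hb00 : b = 0 := by rw [key, hk0]; ring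
    have ha2 : a = 2 := by omega
    have : 0 ≤ 2 * 5 - 0 - 4 * e := by
      have := hv2; rw [ha2, hb00] at this; linarith
    left; refine ⟨by omega, by omega, by omega⟩
  · -- k = 1
    right; left
    have hbe : b = e := by rw [key, hk]; ring
    constructor <;> omega
  · -- k ≥ 2
    rcases eq_or_lt_of_le (by omega : (2 : ℤ) ≤ k) with hk2 | hk3
    · right; right
      have hbe : b = 2 * e := by rw [key, ← hk2]; ring
      constructor <;> omega
    · -- k ≥ 3 : contradiction with hv2
      exfalso
      have hk3' : 3 ≤ k := hk3
      have ha_eq : a = b + 2 - k := by omega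
      nlinarith [mul_pos (by omega : (0:ℤ) < k - 2)
        (show (0:ℤ) < 2 * e * (k - 1) - (k - 5) by nlinarith), key, hv2]
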